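/- If u and v are true twins in a graph G (i.e., N[u] = N[v]) and S is a general position set of G with u ∈ S, then S ∪ {v} is also a general position set of G. -/

import Mathlib

open SimpleGraph

variable {V : Type*}

/-- A walk is a shortest path if it is a path and its length equals the distance
between its endpoints. -/
def SimpleGraph.IsShortestPath (G : SimpleGraph V) {u v : V} (p : G.Walk u v) : Prop :=
  p.IsPath ∧ p.length = G.dist u v

/-- `S` is a general position set: no three vertices of `S` lie on a common shortest path. -/
def SimpleGraph.IsGPSet (G : SimpleGraph V) (S : Set V) : Prop :=
  ∀ ⦃u v : V⦄ (p : G.Walk u v), G.IsShortestPath p →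
    ∀ x ∈ S, ∀ y ∈ S, ∀ z ∈ S, x ≠ y → x ≠ z → y ≠ z →
      ¬ (x ∈ p.support ∧ y ∈ p.support ∧ z ∈ p.support)

/-- `u` and `v` are `S`-visible: some shortest `u,v`-path has no internal vertex in `S`. -/
def SimpleGraph.SVisible (G : SimpleGraph V) (S : Set V) (u v : V) : Prop :=
  ∃ p : G.Walk u v, G.IsShortestPath p ∧ ∀ w ∈ p.support, w ≠ u → w ≠ v → w ∉ S

/-- `S` is a mutual-visibility set. -/
def SimpleGraph.IsMVSet (G : SimpleGraph V) (S : Set V) : Prop :=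
  ∀ u ∈ S, ∀ v ∈ S, u ≠ v → G.SVisible S u v

/-- `S` is a total mutual-visibility set. -/
def SimpleGraph.IsTotalMVSet (G : SimpleGraph V) (S : Set V) : Prop :=
  ∀ u v : V, u ≠ v → G.SVisible S u v

/-- `S` is an outer mutual-visibility set. -/
def SimpleGraph.IsOuterMVSet (G : SimpleGraph V) (S : Set V) : Prop :=
  G.IsMVSet S ∧ ∀ u ∈ S, ∀ v ∉ S, u ≠ v → G.SVisible S u v

/-- The mutual-visibility number `μ(G)`. -/
noncomputable def SimpleGraph.mutualVisibilityNumber (G : SimpleGraph V) [Fintype V] : ℕ :=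
  sSup {k | ∃ S : Finset V, G.IsMVSet ↑S ∧ S.card = k}

/-- The total mutual-visibility number `μ_t(G)`. -/
noncomputable def SimpleGraph.totalMutualVisibilityNumber (G : SimpleGraph V) [Fintype V] : ℕ :=
  sSup {k | ∃ S : Finset V, G.IsTotalMVSet ↑S ∧ S.card = k}

/-- The outer mutual-visibility number `μ_o(G)`. -/
noncomputable def SimpleGraph.outerMutualVisibilityNumber (G : SimpleGraph V) [Fintype V] : ℕ :=
  sSup {k | ∃ S : Finset V, G.IsOuterMVSet ↑S ∧ S.card = k}

/-- The general position number `gp(G)`. -/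
noncomputable def SimpleGraph.gpNumber (G : SimpleGraph V) [Fintype V] : ℕ :=
  sSup {k | ∃ S : Finset V, G.IsGPSet ↑S ∧ S.card = k}

/-- The double graph `D(G)`: two copies of each vertex, `(u, b)` adjacent to `(v, c)`
iff `u` adjacent to `v` in `G`. -/
def SimpleGraph.doubleGraph (G : SimpleGraph V) : SimpleGraph (V × Bool) where
  Adj x y := G.Adj x.1 y.1
  symm := ⟨fun _ _ h => G.adj_symm h⟩
  loopless := ⟨fun x h => G.irrefl (v := x.1) h⟩

/-- The Mycielskian `M(G)`: `some (u, false)` are the original vertices, `some (u, true)`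
their copies, and `none` is the apex vertex `v*`. -/
def SimpleGraph.mycielskian (G : SimpleGraph V) : SimpleGraph (Option (V × Bool)) where
  Adj x y := match x, y with
    | some (u, false), some (v, false) => G.Adj u v
    | some (u, false), some (v, true) => G.Adj u v
    | some (u, true), some (v, false) => G.Adj u v
    | some (_, true), none => True
    | none, some (_, true) => True
    | _, _ => False
  symm := by
    constructor
    rintro (_ | ⟨u, (_|_)⟩) (_ | ⟨v, (_|_)⟩) h <;>
      first
        | exact h
        | exact G.adj_symm h
  loopless := by
    constructor
    rintro (_ | ⟨u, (_|_)⟩) h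
    · exact h
    · exact G.irrefl (v := u) h
    · exact h



section Aux

variable {V : Type*}

private lemma dist_map_iso (G : SimpleGraph V) (e : G ≃g G) (a b : V) :
    G.dist (e a) (e b) = G.dist a b := by
  have key : ∀ x y : V, ∀ f : G ≃g G, G.dist (f x) (f y) ≤ G.dist x y := by
    intro x y f
    by_cases h : G.dist x y = 0
    · rcases SimpleGraph.dist_eq_zero_iff_eq_or_not_reachable.mp h with rfl | hr
      · simp [SimpleGraph.dist_self]
      · have : ¬ G.Reachable (f x) (f y) := by
          intro hr'
          exact hr ⟨(hr'.some.map f.symm.toHom).copy (f.symm_apply_apply x) (f.symm_apply_apply y)⟩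
        rw [SimpleGraph.dist_eq_zero_of_not_reachable this]
        exact Nat.zero_le _
    · obtain ⟨p, hp⟩ := SimpleGraph.exists_walk_of_dist_ne_zero h
      calc G.dist (f x) (f y) ≤ (p.map f.toHom).length := SimpleGraph.dist_le _
        _ = p.length := SimpleGraph.Walk.length_map f.toHom p
        _ = G.dist x y := hp
  refine le_antisymm (key a b e) ?_
  have := key (e a) (e b) e.symm
  simpa using this

private lemma split_lemma (G : SimpleGraph V) [DecidableEq V] (hc : G.Connected)
    {a b w : V} (p : G.Walk a b) (hlen : p.length = G.dist a b) (hw : w ∈ p.support) :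
    (p.takeUntil w hw).length = G.dist a w ∧ (p.dropUntil w hw).length = G.dist w b := by
  have h1 : G.dist a w ≤ (p.takeUntil w hw).length := SimpleGraph.dist_le _
  have h2 : G.dist w b ≤ (p.dropUntil w hw).length := SimpleGraph.dist_le _
  have h3 : (p.takeUntil w hw).length + (p.dropUntil w hw).length = p.length := by
    have := congrArg SimpleGraph.Walk.length (p.take_spec hw)
    rwa [SimpleGraph.Walk.length_append] at this
  have h4 : G.dist a b ≤ G.dist a w + G.dist w b := hc.dist_triangle
  omega

private lemma sum_split (G : SimpleGraph V) [DecidableEq V] {a b w : V} (p : G.Walk a b)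
    (hw : w ∈ p.support) :
    (p.takeUntil w hw).length + (p.dropUntil w hw).length = p.length := by
  have := congrArg SimpleGraph.Walk.length (p.take_spec hw)
  rwa [SimpleGraph.Walk.length_append] at this

end Aux

theorem true_twins_gp (G : SimpleGraph V) (hconn : G.Connected) (u v : V)
    (htwin : insert u (G.neighborSet u) = insert v (G.neighborSet v)) (S : Set V)
    (hS : G.IsGPSet S) (hu : u ∈ S) :
    G.IsGPSet (S ∪ {v}) := by
  classical
  by_cases huv : u = v
  · subst huv
    have : S ∪ {u} = S := by rw [Set.union_singleton, Set.insert_eq_self.mpr hu]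
    rw [this]; exact hS
  by_cases hvS : v ∈ S
  · have : S ∪ {v} = S := by rw [Set.union_singleton, Set.insert_eq_self.mpr hvS]
    rw [this]; exact hS
  -- basic twin facts
  have htwin' : ∀ w : V, (w = u ∨ G.Adj u w) ↔ (w = v ∨ G.Adj v w) := by
    intro w
    have := Set.ext_iff.mp htwin w
    simpa [SimpleGraph.mem_neighborSet] using this
  have hadj : G.Adj u v := by
    rcases (htwin' v).mpr (Or.inl rfl) with h | h
    · exact absurd h.symm huv
    · exact h
  have hadj' : ∀ w : V, w ≠ u → w ≠ v → (G.Adj u w ↔ G.Adj v w) := by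
    intro w hwu hwv
    constructor
    · intro h; rcases (htwin' w).mp (Or.inr h) with h' | h'
      · exact absurd h' hwv
      · exact h'
    · intro h; rcases (htwin' w).mpr (Or.inr h) with h' | h'
      · exact absurd h' hwu
      · exact h'
  -- the swap automorphism
  have hswap : ∀ a b : V, G.Adj a b → G.Adj (Equiv.swap u v a) (Equiv.swap u v b) := by
    intro a b hab
    rcases eq_or_ne a u with rfl | hau
    · rw [Equiv.swap_apply_left]
      rcases eq_or_ne b v with rfl | hbv
      · rw [Equiv.swap_apply_right]; exact hadj.symm
      · have hbu : b ≠ a := fun h => G.loopless.irrefl a (h ▸ hab)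
        rw [Equiv.swap_apply_of_ne_of_ne hbu hbv]
        exact (hadj' b hbu hbv).mp hab
    rcases eq_or_ne a v with rfl | hav
    · rw [Equiv.swap_apply_right]
      rcases eq_or_ne b u with rfl | hbu
      · rw [Equiv.swap_apply_left]; exact hadj
      · have hbv : b ≠ a := fun h => G.loopless.irrefl a (h ▸ hab)
        rw [Equiv.swap_apply_of_ne_of_ne hbu hbv]
        exact (hadj' b hbu hbv).mpr hab
    · rw [Equiv.swap_apply_of_ne_of_ne hau hav]
      rcases eq_or_ne b u with rfl | hbu
      · rw [Equiv.swap_apply_left]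
        exact ((hadj' a hau hav).mp hab.symm).symm
      rcases eq_or_ne b v with rfl | hbv
      · rw [Equiv.swap_apply_right]
        exact ((hadj' a hau hav).mpr hab.symm).symm
      · rw [Equiv.swap_apply_of_ne_of_ne hbu hbv]
        exact hab
  let e : G ≃g G := ⟨Equiv.swap u v, by
    intro a b
    constructor
    · intro h
      have := hswap _ _ h
      simpa using this
    · exact hswap a b⟩
  have he : ∀ w : V, e w = Equiv.swap u v w := fun _ => rfl
  -- twin distance equality
  have hdist : ∀ w : V, w ≠ u → w ≠ v → G.dist u w = G.dist v w := by
    intro w hwu hwv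
    have hdq := dist_map_iso G e u w
    rw [he, he, Equiv.swap_apply_left, Equiv.swap_apply_of_ne_of_ne hwu hwv] at hdq
    exact hdq.symm
  have hduv : G.dist u v = 1 := SimpleGraph.dist_eq_one_iff_adj.mpr hadj
  have hvu1 : G.dist v u = 1 := by rw [SimpleGraph.dist_comm]; exact hduv
  have hzz : ∀ w : V, G.dist w w = 0 := fun w => (hconn.dist_eq_zero_iff).mpr rfl
  -- key: no shortest-length walk contains u, v and a third vertex
  have claimC : ∀ {a b : V} (p : G.Walk a b), p.length = G.dist a b →
      u ∈ p.support → v ∈ p.support → ∀ y ∈ p.support, y ≠ u → y ≠ v → False := by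
    intro a b p hlen hup hvp y hyp hyu hyv
    have hsplitu := split_lemma G hconn p hlen hup
    have hsum_u := sum_split G p hup
    have hab : (a = u ∧ b = v) ∨ (a = v ∧ b = u) := by
      rcases (SimpleGraph.Walk.mem_support_append_iff _ _).mp
          ((p.take_spec hup) ▸ hvp) with hvt | hvd
      · -- v in takeUntil : a → u
        have hsv := split_lemma G hconn (p.takeUntil u hup) hsplitu.1 hvt
        have hsum_v := sum_split G (p.takeUntil u hup) hvt
        have key : G.dist a v + G.dist v u = G.dist a u := by
          have h1 := hsv.1; have h2 := hsv.2; omega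
        by_cases hau : a = u
        · exfalso
          rw [hau] at key
          have := hzz u
          omega
        by_cases hav : a = v
        · right
          refine ⟨hav, ?_⟩
          by_contra hbu
          by_cases hbv : b = v
          · have h0 : G.dist a b = 0 := by rw [hav, hbv]; exact hzz v
            have h1 : G.dist u b = 1 := by rw [hbv]; exact hduv
            have h2 : G.dist a v = 0 := by rw [hav]; exact hzz v
            have h3 := hsplitu.1; have h4 := hsplitu.2
            omega
          · have h6 : G.dist u b = G.dist v b := hdist b hbu hbv
            have h2 : G.dist a v = 0 := by rw [hav]; exact hzz v
            have h3 : G.dist a b = G.dist v b := by rw [hav]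
            have h4 := hsplitu.1; have h5 := hsplitu.2
            omega
        · exfalso
          have h6 : G.dist a u = G.dist a v :=
            SimpleGraph.dist_comm.trans
              ((hdist a hau hav).trans SimpleGraph.dist_comm)
          omega
      · -- v in dropUntil : u → b
        have hsv := split_lemma G hconn (p.dropUntil u hup) hsplitu.2 hvd
        have hsum_v := sum_split G (p.dropUntil u hup) hvd
        have key : G.dist u v + G.dist v b = G.dist u b := by
          have h1 := hsv.1; have h2 := hsv.2; omega
        by_cases hbu : b = u
        · exfalso
          rw [hbu] at key
          have := hzz u
          omega
        by_cases hbv : b = v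
        · left
          refine ⟨?_, hbv⟩
          by_contra hau
          by_cases hav : a = v
          · have h0 : G.dist a b = 0 := by rw [hav, hbv]; exact hzz v
            have h1 : G.dist a u = 1 := by rw [hav]; exact hvu1
            have h3 := hsplitu.1; have h4 := hsplitu.2
            omega
          · have h6 : G.dist a u = G.dist a v :=
              SimpleGraph.dist_comm.trans
                ((hdist a hau hav).trans SimpleGraph.dist_comm)
            have h1 : G.dist u b = 1 := by rw [hbv]; exact hduv
            have h3 : G.dist a b = G.dist a v := by rw [hbv]
            have h4 := hsplitu.1; have h5 := hsplitu.2
            omega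
        · exfalso
          have h6 : G.dist u b = G.dist v b := hdist b hbu hbv
          omega
    -- so p is a single edge between u and v; y can't be on it
    have hL : p.length = 1 := by
      rcases hab with ⟨ha, hb⟩ | ⟨ha, hb⟩ <;> rw [hlen, ha, hb]
      · exact hduv
      · exact hvu1
    have hy := split_lemma G hconn p hlen hyp
    have hsum_y := sum_split G p hyp
    have hsum : G.dist a y + G.dist y b = 1 := by
      have h1 := hy.1; have h2 := hy.2; omega
    have hyab : y = a ∨ y = b := by
      rcases Nat.eq_zero_or_pos (G.dist a y) with h | h
      · left; exact ((hconn.dist_eq_zero_iff).mp h).symm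
      · right
        have : G.dist y b = 0 := by omega
        exact (hconn.dist_eq_zero_iff).mp this
    rcases hab with ⟨ha, hb⟩ | ⟨ha, hb⟩ <;> rcases hyab with rfl | rfl
    · exact hyu ha
    · exact hyv hb
    · exact hyv ha
    · exact hyu hb
  -- key lemma K
  have K : ∀ {a b : V} (p : G.Walk a b), G.IsShortestPath p →
      ∀ x ∈ S, ∀ y ∈ S, x ≠ y →
      x ∈ p.support → y ∈ p.support → v ∈ p.support → False := by
    intro a b p hp x hx y hy hxy hxp hyp hvp
    have hxv : x ≠ v := fun h => hvS (h ▸ hx)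
    have hyv : y ≠ v := fun h => hvS (h ▸ hy)
    by_cases hup : u ∈ p.support
    · by_cases hxu : x = u
      · exact claimC p hp.2 (hxu ▸ hxp) hvp y hyp (hxu ▸ (Ne.symm hxy)) hyv
      by_cases hyu : y = u
      · exact claimC p hp.2 (hyu ▸ hyp) hvp x hxp (hyu ▸ hxy) hxv
      · exact hS p hp x hx y hy u hu hxy hxu hyu ⟨hxp, hyp, hup⟩
    · have hxu : x ≠ u := fun h => hup (h ▸ hxp)
      have hyu : y ≠ u := fun h => hup (h ▸ hyp)
      set q := p.map e.toHom with hq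
      have hqpath : q.IsPath := SimpleGraph.Walk.map_isPath_of_injective
        (Equiv.injective _) hp.1
      have hqlen : q.length = G.dist (e a) (e b) := by
        rw [hq, SimpleGraph.Walk.length_map, dist_map_iso G e a b]
        exact hp.2
      have hmem : ∀ w ∈ p.support, Equiv.swap u v w ∈ q.support := by
        intro w hw
        rw [hq, SimpleGraph.Walk.support_map]
        exact List.mem_map_of_mem hw
      have hxq : x ∈ q.support := by
        have := hmem x hxp
        rwa [Equiv.swap_apply_of_ne_of_ne hxu hxv] at this
      have hyq : y ∈ q.support := by
        have := hmem y hyp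
        rwa [Equiv.swap_apply_of_ne_of_ne hyu hyv] at this
      have huq : u ∈ q.support := by
        have := hmem v hvp
        rwa [Equiv.swap_apply_right] at this
      exact hS q ⟨hqpath, hqlen⟩ x hx y hy u hu hxy hxu hyu ⟨hxq, hyq, huq⟩
  -- main argument
  intro a b p hp x hx y hy z hz hxy hxz hyz hmem
  obtain ⟨hxp, hyp, hzp⟩ := hmem
  rcases hx with hx | hx
  · rcases hy with hy | hy
    · rcases hz with hz | hz
      · exact hS p hp x hx y hy z hz hxy hxz hyz ⟨hxp, hyp, hzp⟩
      · exact K p hp x hx y hy hxy hxp hyp (Set.eq_of_mem_singleton hz ▸ hzp)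
    · rcases hz with hz | hz
      · exact K p hp x hx z hz hxz hxp hzp (Set.eq_of_mem_singleton hy ▸ hyp)
      · exact hyz ((Set.eq_of_mem_singleton hy).trans (Set.eq_of_mem_singleton hz).symm)
  · rcases hy with hy | hy
    · rcases hz with hz | hz
      · exact K p hp y hy z hz hyz hyp hzp (Set.eq_of_mem_singleton hx ▸ hxp)
      · exact hxz ((Set.eq_of_mem_singleton hx).trans (Set.eq_of_mem_singleton hz).symm)
    · exact hxy ((Set.eq_of_mem_singleton hx).trans (Set.eq_of_mem_singleton hy).symm)
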